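/- Let BP(T) be the balanced-parenthesis sequence of the 2d-min heap Min(A), and let f(i) denote the position in BP of the opening bit (0) written when node i is first visited in preorder. Then a node i is valid (i.e., a non-root node that is neither a leftmost child nor the immediate right sibling of a leaf) if and only if f(i) > 2 and BP[f(i)-2] = BP[f(i)-1] = 1. -/

import Mathlib

def psv (A : ℕ → ℤ) (i : ℕ) : ℕ := Nat.findGreatest (fun j => A j < A i) (i - 1)

def plv (A : ℕ → ℤ) (i : ℕ) : ℕ := Nat.findGreatest (fun j => A i < A j) (i - 1)

def internalMin (A : ℕ → ℤ) (n i : ℕ) : Prop := ∃ j, 1 ≤ j ∧ j ≤ n ∧ psv A j = i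

def internalMax (A : ℕ → ℤ) (n i : ℕ) : Prop := ∃ j, 1 ≤ j ∧ j ≤ n ∧ plv A j = i

def leafMin (A : ℕ → ℤ) (n i : ℕ) : Prop := ¬ internalMin A n i

def leafMax (A : ℕ → ℤ) (n i : ℕ) : Prop := ¬ internalMax A n i

def NoConsecEq (A : ℕ → ℤ) (n : ℕ) : Prop := ∀ i, 1 ≤ i → i < n → A i ≠ A (i + 1)

def isLeftmostChildMin (A : ℕ → ℤ) (n c : ℕ) : Prop :=
  1 ≤ c ∧ c ≤ n ∧ ∀ j, 1 ≤ j → j ≤ n → psv A j = psv A c → c ≤ j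

def isLeftmostChildMax (A : ℕ → ℤ) (n c : ℕ) : Prop :=
  1 ≤ c ∧ c ≤ n ∧ ∀ j, 1 ≤ j → j ≤ n → plv A j = plv A c → c ≤ j

def immLeftSibMin (A : ℕ → ℤ) (n j i : ℕ) : Prop :=
  1 ≤ j ∧ j < i ∧ i ≤ n ∧ psv A j = psv A i ∧ ∀ k, j < k → k < i → psv A k ≠ psv A i

def immLeftSibMax (A : ℕ → ℤ) (n j i : ℕ) : Prop :=
  1 ≤ j ∧ j < i ∧ i ≤ n ∧ plv A j = plv A i ∧ ∀ k, j < k → k < i → plv A k ≠ plv A i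

def redMin (A : ℕ → ℤ) (n i : ℕ) : Prop := ∃ j, immLeftSibMin A n j i ∧ A j ≠ A i

def redMax (A : ℕ → ℤ) (n i : ℕ) : Prop := ∃ j, immLeftSibMax A n j i ∧ A j ≠ A i

def validMin (A : ℕ → ℤ) (n i : ℕ) : Prop :=
  1 ≤ i ∧ i ≤ n ∧ ¬ isLeftmostChildMin A n i ∧ ¬ ∃ j, immLeftSibMin A n j i ∧ leafMin A n j

def validMax (A : ℕ → ℤ) (n i : ℕ) : Prop :=
  1 ≤ i ∧ i ≤ n ∧ ¬ isLeftmostChildMax A n i ∧ ¬ ∃ j, immLeftSibMax A n j i ∧ leafMax A n j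

inductive LTree where
  | node : ℕ → List LTree → LTree

mutual
def bpt : LTree → List (Bool × ℕ)
  | .node l cs => (false, l) :: bptL cs ++ [(true, l)]
def bptL : List LTree → List (Bool × ℕ)
  | [] => []
  | t :: ts => bpt t ++ bptL ts
end

def bpSeq (t : LTree) : List Bool := (bpt t).map Prod.fst

def fpos (t : LTree) (i : ℕ) : ℕ := (bpt t).idxOf (false, i) + 1

def childList (P : ℕ → ℕ) (n i : ℕ) : List ℕ :=
  (List.range (n + 1)).filter (fun j => decide (1 ≤ j ∧ P j = i ∧ i < j))

def buildTree (P : ℕ → ℕ) (n : ℕ) : ℕ → ℕ → LTree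
  | 0, i => .node i []
  | fuel + 1, i => .node i ((childList P n i).map (buildTree P n fuel))

def minTree (A : ℕ → ℤ) (n : ℕ) : LTree := buildTree (psv A) n (n + 1) 0

def maxTree (A : ℕ → ℤ) (n : ℕ) : LTree := buildTree (plv A) n (n + 1) 0

namespace StmtAux

lemma bpt_ne_nil (t : LTree) : bpt t ≠ [] := by
  cases t; simp [bpt]

lemma bptL_append (xs ys : List LTree) : bptL (xs ++ ys) = bptL xs ++ bptL ys := by
  induction xs with
  | nil => simp [bptL]
  | cons t ts ih => simp [bptL, ih]

lemma bptL_ne_nil {ts : List LTree} (h : ts ≠ []) : bptL ts ≠ [] := by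
  cases ts with
  | nil => exact absurd rfl h
  | cons t ts => simp [bptL]; intro hh; exact absurd hh (bpt_ne_nil t)

lemma bptL_last : ∀ ts : List LTree, ts ≠ [] → ∃ B r, bptL ts = B ++ [((true : Bool), r)] := by
  intro ts
  induction ts with
  | nil => intro h; exact absurd rfl h
  | cons t ts ih =>
    intro _
    cases ts with
    | nil =>
      cases t with
      | node l cs => exact ⟨(false, l) :: bptL cs, l, by simp [bptL, bpt]⟩
    | cons t' ts' =>
      obtain ⟨B, r, hB⟩ := ih (by simp)
      exact ⟨bpt t ++ B, r, by rw [show bptL (t :: t' :: ts') = bpt t ++ bptL (t' :: ts') from rfl, hB, List.append_assoc]⟩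

lemma mem_childList {P : ℕ → ℕ} {n i j : ℕ} :
    j ∈ childList P n i ↔ (1 ≤ j ∧ j ≤ n ∧ P j = i ∧ i < j) := by
  simp [childList, List.mem_filter, List.mem_range, Nat.lt_succ_iff]
  tauto

lemma childList_sorted (P : ℕ → ℕ) (n i : ℕ) : (childList P n i).Pairwise (· < ·) := by
  exact List.Pairwise.sublist List.filter_sublist List.pairwise_lt_range

lemma childList_eq_nil {P : ℕ → ℕ} {n i : ℕ} (h : n < i) : childList P n i = [] := by
  rw [List.eq_nil_iff_forall_not_mem]
  intro j hj
  rw [mem_childList] at hj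
  omega

end StmtAux
namespace StmtAux

lemma buildTree_high {P : ℕ → ℕ} {n i : ℕ} (h : n < i) (f : ℕ) :
    buildTree P n f i = .node i [] := by
  cases f <;> simp [buildTree, childList_eq_nil h]

lemma buildTree_stable (P : ℕ → ℕ) (n : ℕ) :
    ∀ K f g i, n + 1 - i ≤ K → n < i + f → n < i + g →
      buildTree P n f i = buildTree P n g i := by
  intro K
  induction K with
  | zero =>
    intro f g i hk hf hg
    have hi : n < i := by omega
    rw [buildTree_high hi, buildTree_high hi]
  | succ K ih =>
    intro f g i hk hf hg
    cases f with
    | zero =>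
      have hi : n < i := by omega
      rw [buildTree_high hi, buildTree_high hi]
    | succ f =>
      cases g with
      | zero =>
        have hi : n < i := by omega
        rw [buildTree_high hi, buildTree_high hi]
      | succ g =>
        show LTree.node i _ = LTree.node i _
        congr 1
        apply List.map_congr_left
        intro c hc
        rw [mem_childList] at hc
        exact ih f g c (by omega) (by omega) (by omega)

def subT (P : ℕ → ℕ) (n i : ℕ) : LTree := buildTree P n (n + 1) i

lemma subT_eq (P : ℕ → ℕ) (n i : ℕ) :
    subT P n i = .node i ((childList P n i).map (subT P n)) := by
  show LTree.node i _ = _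
  congr 1
  apply List.map_congr_left
  intro c hc
  rw [mem_childList] at hc
  exact buildTree_stable P n (n + 1 - c) n (n + 1) c le_rfl (by omega) (by omega)

lemma bpt_subT (P : ℕ → ℕ) (n i : ℕ) :
    bpt (subT P n i) =
      (false, i) :: bptL ((childList P n i).map (subT P n)) ++ [(true, i)] := by
  conv_lhs => rw [subT_eq]
  simp [bpt]

def isDesc (P : ℕ → ℕ) (i j : ℕ) : Prop := ∃ k, P^[k] j = i

variable {P : ℕ → ℕ}

lemma ple (hP0 : P 0 = 0) (hP1 : ∀ m, 1 ≤ m → P m < m) (m : ℕ) : P m ≤ m := by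
  cases m with
  | zero => omega
  | succ m => exact le_of_lt (hP1 _ (by omega))

lemma iter_le (hP0 : P 0 = 0) (hP1 : ∀ m, 1 ≤ m → P m < m) :
    ∀ k m, P^[k] m ≤ m := by
  intro k
  induction k with
  | zero => intro m; simp
  | succ k ih =>
    intro m
    rw [Function.iterate_succ_apply]
    exact le_trans (ih (P m)) (ple hP0 hP1 m)

lemma desc_refl (i : ℕ) : isDesc P i i := ⟨0, rfl⟩

lemma desc_zero (hP0 : P 0 = 0) (hP1 : ∀ m, 1 ≤ m → P m < m) :
    ∀ m, isDesc P 0 m := by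
  intro m
  induction m using Nat.strong_induction_on with
  | _ m ih =>
    cases Nat.eq_zero_or_pos m with
    | inl h => subst h; exact desc_refl 0
    | inr h =>
      obtain ⟨k, hk⟩ := ih (P m) (hP1 m h)
      exact ⟨k + 1, by rw [Function.iterate_succ_apply, hk]⟩

lemma desc_step (hP0 : P 0 = 0) (hP1 : ∀ m, 1 ≤ m → P m < m) :
    ∀ k j i, P^[k] j = i → j ≠ i → ∃ c, P c = i ∧ i < c ∧ c ≤ j ∧ isDesc P c j := by
  intro k
  induction k with
  | zero => intro j i hk hne; exact absurd hk hne
  | succ k ih =>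
    intro j i hk hne
    rw [Function.iterate_succ_apply'] at hk
    by_cases hm : P^[k] j = i
    · exact ih j i hm hne
    · refine ⟨P^[k] j, hk, ?_, iter_le hP0 hP1 k j, ⟨k, rfl⟩⟩
      have h1 : 1 ≤ P^[k] j := by
        rcases Nat.eq_zero_or_pos (P^[k] j) with h | h
        · rw [h] at hk hm; rw [hP0] at hk; omega
        · exact h
      have := hP1 _ h1
      omega

lemma desc_unique_aux (hP0 : P 0 = 0) (hP1 : ∀ m, 1 ≤ m → P m < m)
    {i j c c' k k'} (hc : P c = i) (hic' : i < c') (hk : P^[k] j = c) (hk' : P^[k'] j = c')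
    (hkk : k ≤ k') : c = c' := by
  have : P^[k'] j = P^[k' - k] c := by
    rw [← hk, ← Function.iterate_add_apply]
    congr 1
    omega
  rw [hk'] at this
  rcases Nat.eq_zero_or_pos (k' - k) with h | h
  · rw [h] at this; simpa using this.symm
  · exfalso
    obtain ⟨m, hm⟩ : ∃ m, k' - k = m + 1 := ⟨k' - k - 1, by omega⟩
    rw [hm, Function.iterate_succ_apply, hc] at this
    have := iter_le hP0 hP1 m i
    omega

lemma desc_unique (hP0 : P 0 = 0) (hP1 : ∀ m, 1 ≤ m → P m < m)
    {i j c c'} (hc : P c = i) (hc' : P c' = i) (hic : i < c) (hic' : i < c')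
    (h1 : isDesc P c j) (h2 : isDesc P c' j) : c = c' := by
  obtain ⟨k, hk⟩ := h1
  obtain ⟨k', hk'⟩ := h2
  rcases le_total k k' with h | h
  · exact desc_unique_aux hP0 hP1 hc hic' hk hk' h
  · exact (desc_unique_aux hP0 hP1 hc' hic hk' hk h).symm

end StmtAux
namespace StmtAux

open scoped Classical

variable {P : ℕ → ℕ}

lemma count_bptL (x : Bool × ℕ) : ∀ ts : List LTree,
    List.count x (bptL ts) = (ts.map (fun t => List.count x (bpt t))).sum := by
  intro ts
  induction ts with
  | nil => simp [bptL]
  | cons t ts ih =>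
    rw [show bptL (t :: ts) = bpt t ++ bptL ts from rfl]
    simp [List.count_append, ih]

lemma count_false_bpt (hP0 : P 0 = 0) (hP1 : ∀ m, 1 ≤ m → P m < m) (n : ℕ) :
    ∀ K i j, n + 1 - i ≤ K → j ≤ n →
      List.count ((false, j) : Bool × ℕ) (bpt (subT P n i)) =
        if isDesc P i j then 1 else 0 := by
  intro K
  induction K with
  | zero =>
    intro i j hK hj
    have hi : n < i := by omega
    have hne : ¬ isDesc P i j := by
      rintro ⟨k, hk⟩
      have := iter_le hP0 hP1 k j
      omega
    rw [if_neg hne]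
    unfold subT
    rw [buildTree_high hi]
    rw [show bpt (LTree.node i []) = [((false : Bool), i), ((true : Bool), i)] from by
      simp [bpt, bptL]]
    rw [List.count_eq_zero]
    simp
    omega
  | succ K ih =>
    intro i j hK hj
    have hterm : ∀ c ∈ childList P n i,
        List.count ((false, j) : Bool × ℕ) (bpt (subT P n c)) =
          if isDesc P c j then 1 else 0 := by
      intro c hc
      rw [mem_childList] at hc
      exact ih c j (by omega) hj
    by_cases hij : j = i
    · subst hij
      rw [if_pos (desc_refl j)]
      have hz : List.count ((false, j) : Bool × ℕ)
          (bptL ((childList P n j).map (subT P n))) = 0 := by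
        rw [count_bptL, List.map_map]
        apply List.sum_eq_zero
        intro x hx
        rw [List.mem_map] at hx
        obtain ⟨c, hc, rfl⟩ := hx
        show List.count _ (bpt (subT P n c)) = 0
        rw [hterm c hc, if_neg]
        rintro ⟨k, hk⟩
        have := iter_le hP0 hP1 k j
        rw [mem_childList] at hc
        omega
      rw [bpt_subT, List.count_append, List.count_cons, hz]
      simp
    · rw [bpt_subT, List.count_append, List.count_cons]
      have e2 : List.count ((false, j) : Bool × ℕ) [((true : Bool), i)] = 0 := by simp
      rw [e2, count_bptL, List.map_map]
      simp only [Function.comp_def]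
      rw [if_neg (show ¬ ((((false, i) : Bool × ℕ) == (false, j)) = true) from by simp; omega)]
      simp only [add_zero]
      by_cases hd : isDesc P i j
      · rw [if_pos hd]
        obtain ⟨k, hk⟩ := hd
        obtain ⟨c₀, hc₀P, hic₀, hc₀j, hdesc₀⟩ :=
          desc_step hP0 hP1 k j i hk hij
        have hc₀mem : c₀ ∈ childList P n i :=
          mem_childList.mpr ⟨by omega, by omega, hc₀P, hic₀⟩
        have hpw := childList_sorted P n i
        obtain ⟨l1, l2, hcs⟩ := List.append_of_mem hc₀mem
        rw [hcs] at hpw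
        have hcnt0 : ∀ c ∈ childList P n i, c ≠ c₀ →
            ((fun c => List.count ((false, j) : Bool × ℕ) (bpt (subT P n c))) ∘ id) c = 0 := by
          intro c hc hne
          have hmem := hc
          rw [mem_childList] at hmem
          show List.count _ (bpt (subT P n c)) = 0
          rw [hterm c hc, if_neg]
          intro hdc
          exact hne (desc_unique hP0 hP1 hmem.2.2.1 hc₀P hmem.2.2.2 hic₀ hdc hdesc₀)
        rw [hcs, List.map_append, List.map_cons, List.sum_append, List.sum_cons]
        have hz1 : (l1.map (fun c => List.count ((false, j) : Bool × ℕ) (bpt (subT P n c)))).sum = 0 := by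
          apply List.sum_eq_zero
          intro x hx
          rw [List.mem_map] at hx
          obtain ⟨c, hc, rfl⟩ := hx
          have hne : c ≠ c₀ := by
            have := (List.pairwise_append.mp hpw).2.2 c hc c₀ (by simp)
            omega
          exact hcnt0 c (by rw [hcs]; exact List.mem_append_left _ hc) hne
        have hz2 : (l2.map (fun c => List.count ((false, j) : Bool × ℕ) (bpt (subT P n c)))).sum = 0 := by
          apply List.sum_eq_zero
          intro x hx
          rw [List.mem_map] at hx
          obtain ⟨c, hc, rfl⟩ := hx
          have hne : c ≠ c₀ := by
            have hpw2 := (List.pairwise_append.mp hpw).2.1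
            rw [List.pairwise_cons] at hpw2
            have := hpw2.1 c hc
            omega
          exact hcnt0 c (by rw [hcs]; exact List.mem_append_right _ (List.mem_cons_of_mem _ hc)) hne
        rw [hz1, hz2, hterm c₀ hc₀mem, if_pos hdesc₀]
      · rw [if_neg hd]
        have hz : ((childList P n i).map
            (fun c => List.count ((false, j) : Bool × ℕ) (bpt (subT P n c)))).sum = 0 := by
          apply List.sum_eq_zero
          intro x hx
          rw [List.mem_map] at hx
          obtain ⟨c, hc, rfl⟩ := hx
          rw [hterm c hc, if_neg]
          intro ⟨k, hk⟩
          rw [mem_childList] at hc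
          exact hd ⟨k + 1, by rw [Function.iterate_succ_apply', hk, hc.2.2.1]⟩
        rw [hz]

end StmtAux
namespace StmtAux

variable {P : ℕ → ℕ}

lemma bptL_split {c : ℕ} {cs : List ℕ} (f : ℕ → LTree) (hc : c ∈ cs) :
    ∃ l1 l2, bptL (cs.map f) = bptL (l1.map f) ++ bpt (f c) ++ bptL (l2.map f) ∧
      cs = l1 ++ c :: l2 := by
  obtain ⟨l1, l2, hcs⟩ := List.append_of_mem hc
  refine ⟨l1, l2, ?_, hcs⟩
  rw [hcs, List.map_append, List.map_cons, bptL_append,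
    show bptL (f c :: l2.map f) = bpt (f c) ++ bptL (l2.map f) from rfl, List.append_assoc]

lemma infix_child {n c i : ℕ} (hc : c ∈ childList P n i) :
    bpt (subT P n c) <:+: bpt (subT P n i) := by
  conv_rhs => rw [bpt_subT]
  obtain ⟨l1, l2, hsplit, -⟩ := bptL_split (subT P n) hc
  rw [hsplit]
  exact ⟨(false, i) :: bptL (l1.map (subT P n)),
    bptL (l2.map (subT P n)) ++ [(true, i)], by simp⟩

lemma iter_zero (hP0 : P 0 = 0) : ∀ k, P^[k] 0 = 0 := by
  intro k
  induction k with
  | zero => rfl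
  | succ k ih => rw [Function.iterate_succ_apply', ih, hP0]

lemma infix_desc (hP0 : P 0 = 0) (hP1 : ∀ m, 1 ≤ m → P m < m) {n : ℕ} :
    ∀ k i j, P^[k] j = i → j ≤ n → bpt (subT P n j) <:+: bpt (subT P n i) := by
  intro k
  induction k with
  | zero =>
    intro i j hk hj
    simp only [Function.iterate_zero, id_eq] at hk
    rw [hk]
  | succ k ih =>
    intro i j hk hj
    rcases Nat.eq_zero_or_pos j with hj0 | hj1
    · subst hj0
      rw [show i = 0 from by rw [← hk, iter_zero hP0]]
    · rw [Function.iterate_succ_apply] at hk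
      have h1 : bpt (subT P n j) <:+: bpt (subT P n (P j)) := by
        apply infix_child
        exact mem_childList.mpr ⟨by omega, hj, rfl, hP1 j hj1⟩
      exact h1.trans (ih i (P j) hk (le_trans (ple hP0 hP1 j) hj))

lemma indexOf_cons' (a x : Bool × ℕ) (l : List (Bool × ℕ)) :
    (a :: l).idxOf x = if a = x then 0 else l.idxOf x + 1 := by
  by_cases h : a = x
  · subst h; simp [List.idxOf, List.findIdx_cons]
  · rw [if_neg h]
    have hb : (a == x) = false := beq_eq_false_iff_ne.mpr h
    simp [List.idxOf, List.findIdx_cons, hb]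

lemma indexOf_append_cons {x : Bool × ℕ} : ∀ (u : List (Bool × ℕ)) (v : List (Bool × ℕ)),
    x ∉ u → (u ++ x :: v).idxOf x = u.length := by
  intro u
  induction u with
  | nil => intro v _; simp [List.idxOf, List.findIdx_cons]
  | cons a u ih =>
    intro v h
    rw [List.mem_cons] at h
    push_neg at h
    show ((a :: (u ++ x :: v)).idxOf x) = u.length + 1
    rw [indexOf_cons' a x _, if_neg (fun hh => h.1 hh.symm), ih v h.2]

lemma getD_map_fst : ∀ (u : List (Bool × ℕ)) (x : Bool × ℕ) (v : List (Bool × ℕ)),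
    ((u ++ x :: v).map Prod.fst).getD u.length false = x.1 := by
  intro u
  induction u with
  | nil => intro x v; simp
  | cons a u ih => intro x v; simpa using ih x v

end StmtAux
namespace StmtAux

lemma bptL_cons (t : LTree) (ts : List LTree) : bptL (t :: ts) = bpt t ++ bptL ts := rfl

lemma sorted_head {cs : List ℕ} {i : ℕ} (hpw : cs.Pairwise (· < ·)) (hi : i ∈ cs)
    (hmin : ∀ c ∈ cs, i ≤ c) : ∃ t, cs = i :: t := by
  cases cs with
  | nil => simp at hi
  | cons a t =>
    rcases List.mem_cons.mp hi with h | h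
    · exact ⟨t, by rw [h]⟩
    · have h1 : a < i := (List.pairwise_cons.mp hpw).1 i h
      have h2 : i ≤ a := hmin a (List.mem_cons_self)
      omega

lemma sorted_adj {cs : List ℕ} {i c : ℕ} (hpw : cs.Pairwise (· < ·)) (hi : i ∈ cs)
    (hc : c ∈ cs) (hlt : c < i) :
    ∃ l1 j l2, cs = l1 ++ j :: i :: l2 ∧ j < i := by
  obtain ⟨a, b, hab⟩ := List.append_of_mem hi
  rw [hab] at hpw hc
  have hca : c ∈ a := by
    rcases List.mem_append.mp hc with h | h
    · exact h
    · rcases List.mem_cons.mp h with h | h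
      · omega
      · have := (List.pairwise_cons.mp (List.pairwise_append.mp hpw).2.1).1 c h
        omega
  have hane : a ≠ [] := by rintro rfl; simp at hca
  obtain ⟨a', j, haj⟩ : ∃ a' j, a = a' ++ [j] := ⟨a.dropLast, a.getLast hane,
    (List.dropLast_append_getLast hane).symm⟩
  have hja : j ∈ a := by rw [haj]; simp
  have hjlt : j < i := (List.pairwise_append.mp hpw).2.2 j hja i (List.mem_cons_self)
  exact ⟨a', j, b, by rw [hab, haj, List.append_assoc, List.singleton_append], hjlt⟩

lemma count_ge_one_of_cons_cons {x y fi : Bool × ℕ} (v : List (Bool × ℕ)) :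
    0 < List.count fi (x :: y :: fi :: v) := by
  have hsub : (fi :: v).Sublist (x :: y :: fi :: v) :=
    ((List.Sublist.refl _).cons _).cons _
  have h := hsub.count_le fi
  have h1 : List.count fi (fi :: v) = List.count fi v + 1 := by
    rw [List.count_cons, if_pos (by simp : (fi == fi) = true)]
  omega

lemma calc_main {L u v : List (Bool × ℕ)} {x y : Bool × ℕ} {i : ℕ}
    (hdec : L = u ++ x :: y :: (false, i) :: v)
    (hcnt : List.count ((false, i) : Bool × ℕ) L = 1)
    (hx : x ≠ (false, i)) (hy : y ≠ (false, i)) :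
    L.idxOf (false, i) = u.length + 2 ∧
      (L.map Prod.fst).getD u.length false = x.1 ∧
      (L.map Prod.fst).getD (u.length + 1) false = y.1 := by
  have hnu : ((false, i) : Bool × ℕ) ∉ u := by
    intro hmem
    have ha : 0 < List.count ((false, i) : Bool × ℕ) u := List.count_pos_iff.mpr hmem
    have hb := count_ge_one_of_cons_cons (x := x) (y := y) (fi := ((false, i) : Bool × ℕ)) v
    rw [hdec, List.count_append] at hcnt
    omega
  have hnu2 : ((false, i) : Bool × ℕ) ∉ u ++ [x, y] := by
    intro hmem
    rcases List.mem_append.mp hmem with h | h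
    · exact hnu h
    · rcases List.mem_cons.mp h with h | h
      · exact hx h.symm
      · rcases List.mem_cons.mp h with h | h
        · exact hy h.symm
        · simp at h
  have hdec2 : L = (u ++ [x, y]) ++ (false, i) :: v := by rw [hdec]; simp
  refine ⟨?_, ?_, ?_⟩
  · rw [hdec2, indexOf_append_cons _ _ hnu2]; simp
  · rw [hdec]; exact getD_map_fst u x _
  · have hdec3 : L = (u ++ [x]) ++ y :: (false, i) :: v := by rw [hdec]; simp
    have := getD_map_fst (u ++ [x]) y ((false, i) :: v)
    rw [← hdec3] at this
    simpa using this
  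
lemma calc_left {L u v : List (Bool × ℕ)} {x : Bool × ℕ} {i : ℕ}
    (hdec : L = u ++ x :: (false, i) :: v)
    (hcnt : List.count ((false, i) : Bool × ℕ) L = 1)
    (hx : x ≠ (false, i)) :
    L.idxOf (false, i) = u.length + 1 ∧
      (L.map Prod.fst).getD u.length false = x.1 := by
  have hnu : ((false, i) : Bool × ℕ) ∉ u := by
    intro hmem
    have ha : 0 < List.count ((false, i) : Bool × ℕ) u := List.count_pos_iff.mpr hmem
    have hsub : (((false, i) : Bool × ℕ) :: v).Sublist (x :: (false, i) :: v) :=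
      (List.Sublist.refl _).cons _
    have hb := hsub.count_le ((false, i) : Bool × ℕ)
    have h1 : List.count ((false, i) : Bool × ℕ) ((false, i) :: v) =
        List.count ((false, i) : Bool × ℕ) v + 1 := by
      rw [List.count_cons, if_pos (by simp : ((((false, i) : Bool × ℕ)) == ((false, i) : Bool × ℕ)) = true)]
    rw [hdec, List.count_append] at hcnt
    omega
  have hnu2 : ((false, i) : Bool × ℕ) ∉ u ++ [x] := by
    intro hmem
    rcases List.mem_append.mp hmem with h | h
    · exact hnu h
    · rcases List.mem_cons.mp h with h | h
      · exact hx h.symm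
      · simp at h
  have hdec2 : L = (u ++ [x]) ++ (false, i) :: v := by rw [hdec]; simp
  refine ⟨?_, ?_⟩
  · rw [hdec2, indexOf_append_cons _ _ hnu2]; simp
  · rw [hdec]; exact getD_map_fst u x _

end StmtAux
open StmtAux in
theorem stmt4 (A : ℕ → ℤ) (n i : ℕ) (h1 : 1 ≤ i) (h2 : i ≤ n) :
    validMin A n i ↔
      (2 < fpos (minTree A n) i ∧
        (bpSeq (minTree A n)).getD (fpos (minTree A n) i - 3) false = true ∧
        (bpSeq (minTree A n)).getD (fpos (minTree A n) i - 2) false = true) := by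
  classical
  have hP1 : ∀ m, 1 ≤ m → psv A m < m := by
    intro m hm
    have h := Nat.findGreatest_le (P := fun j => A j < A m) (n := m - 1)
    unfold psv
    omega
  have hP0 : psv A 0 = 0 := rfl
  have hcnt : List.count ((false, i) : Bool × ℕ) (bpt (subT (psv A) n 0)) = 1 := by
    rw [count_false_bpt hP0 hP1 n (n + 1) 0 i (by omega) h2,
      if_pos (desc_zero hP0 hP1 i)]
  have hpi : psv A i < i := hP1 i h1
  have hmemi : i ∈ childList (psv A) n (psv A i) :=
    mem_childList.mpr ⟨h1, h2, rfl, hpi⟩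
  have hInfix : (bpt (subT (psv A) n (psv A i))).IsInfix (bpt (subT (psv A) n 0)) := by
    obtain ⟨k, hk⟩ := desc_zero hP0 hP1 (psv A i)
    exact infix_desc hP0 hP1 k 0 (psv A i) hk (by omega)
  have hpw := childList_sorted (psv A) n (psv A i)
  have hLM : bpt (minTree A n) = bpt (subT (psv A) n 0) := rfl
  by_cases hLft : isLeftmostChildMin A n i
  · -- i is a leftmost child : both sides false
    have hmin : ∀ c ∈ childList (psv A) n (psv A i), i ≤ c := by
      intro c hc
      rw [mem_childList] at hc
      exact hLft.2.2 c hc.1 hc.2.1 hc.2.2.1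
    obtain ⟨t, hcs⟩ := sorted_head hpw hmemi hmin
    obtain ⟨w, hdecP⟩ : ∃ w, bpt (subT (psv A) n (psv A i)) =
        ((false, psv A i)) :: ((false, i)) :: w := by
      refine ⟨(bptL ((childList (psv A) n i).map (subT (psv A) n)) ++ [(true, i)] ++
        bptL (t.map (subT (psv A) n))) ++ [(true, psv A i)], ?_⟩
      rw [bpt_subT, hcs, List.map_cons, bptL_cons]
      conv_lhs => rw [bpt_subT]
      simp
    obtain ⟨u, v, huv⟩ := hInfix
    have hdec : bpt (subT (psv A) n 0) =
        u ++ ((false, psv A i)) :: ((false, i)) :: (w ++ v) := by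
      rw [← huv, hdecP]; simp
    obtain ⟨hidx, hgd⟩ := calc_left hdec hcnt (by simp; omega)
    have hf : fpos (minTree A n) i = u.length + 2 := by
      unfold fpos
      rw [hLM, hidx]
    have hbs : bpSeq (minTree A n) = (bpt (subT (psv A) n 0)).map Prod.fst := by
      unfold bpSeq
      rw [hLM]
    apply iff_of_false
    · intro hv
      exact hv.2.2.1 hLft
    · rintro ⟨-, -, h3⟩
      rw [hbs, hf, show u.length + 2 - 2 = u.length from rfl, hgd] at h3
      simp at h3
  · -- i has an immediate left sibling j
    have hex : ∃ c, 1 ≤ c ∧ c ≤ n ∧ psv A c = psv A i ∧ c < i := by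
      by_contra hno
      push_neg at hno
      refine hLft ⟨h1, h2, fun k hk1 hk2 hk3 => ?_⟩
      by_contra hlt
      push_neg at hlt
      exact absurd (hno k hk1 hk2 hk3) (by omega)
    obtain ⟨c, hc1, hcn, hcP, hci⟩ := hex
    have hcmem : c ∈ childList (psv A) n (psv A i) :=
      mem_childList.mpr ⟨hc1, hcn, hcP, by rw [← hcP]; exact hP1 c hc1⟩
    obtain ⟨l1, j, l2, hcs, hji⟩ := sorted_adj hpw hmemi hcmem hci
    have hjmem : j ∈ childList (psv A) n (psv A i) := by rw [hcs]; simp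
    have hjprops := mem_childList.mp hjmem
    obtain ⟨hj1, hjn, hjP, hplt⟩ := hjprops
    have hpw2 := hpw
    rw [hcs] at hpw2
    have hadj : ∀ k, j < k → k < i → psv A k ≠ psv A i := by
      intro k hk1 hk2 hkP
      have hkmem : k ∈ childList (psv A) n (psv A i) :=
        mem_childList.mpr ⟨by omega, by omega, hkP, by omega⟩
      rw [hcs] at hkmem
      rcases List.mem_append.mp hkmem with h | h
      · have := (List.pairwise_append.mp hpw2).2.2 k h j (List.mem_cons_self)
        omega
      · rcases List.mem_cons.mp h with h | h
        · omega
        · rcases List.mem_cons.mp h with h | h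
          · omega
          · have hpwj := (List.pairwise_append.mp hpw2).2.1
            rw [List.pairwise_cons] at hpwj
            have hpwi := hpwj.2
            rw [List.pairwise_cons] at hpwi
            have := hpwi.1 k h
            omega
    have himm : immLeftSibMin A n j i := ⟨hj1, hji, h2, hjP, hadj⟩
    obtain ⟨u, v, huv⟩ := hInfix
    by_cases hleaf : childList (psv A) n j = []
    · -- sibling is a leaf : both sides false
      have hbj : bpt (subT (psv A) n j) = [((false : Bool), j), ((true : Bool), j)] := by
        rw [bpt_subT, hleaf]
        simp [bptL]
      obtain ⟨u0, rest, hdecP⟩ : ∃ u0 rest, bpt (subT (psv A) n (psv A i)) =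
          u0 ++ ((false : Bool), j) :: ((true : Bool), j) :: ((false : Bool), i) :: rest := by
        refine ⟨(false, psv A i) :: bptL (l1.map (subT (psv A) n)),
          (bptL ((childList (psv A) n i).map (subT (psv A) n)) ++ [(true, i)]) ++
            (bptL (l2.map (subT (psv A) n)) ++ [(true, psv A i)]), ?_⟩
        rw [bpt_subT, hcs, List.map_append, List.map_cons, List.map_cons, bptL_append,
          bptL_cons, bptL_cons, hbj]
        conv_lhs => rw [bpt_subT (P := psv A) (n := n) (i := i)]
        simp
      have hdec : bpt (subT (psv A) n 0) = (u ++ u0) ++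
          ((false : Bool), j) :: ((true : Bool), j) :: ((false : Bool), i) :: (rest ++ v) := by
        rw [← huv, hdecP]; simp
      obtain ⟨hidx, hg1, hg2⟩ := calc_main hdec hcnt (by simp; omega) (by simp)
      have hf : fpos (minTree A n) i = (u ++ u0).length + 3 := by
        unfold fpos
        rw [hLM, hidx]
      have hbs : bpSeq (minTree A n) = (bpt (subT (psv A) n 0)).map Prod.fst := by
        unfold bpSeq
        rw [hLM]
      apply iff_of_false
      · intro hv
        refine hv.2.2.2 ⟨j, himm, ?_⟩
        rintro ⟨m, hm1, hmn, hmP⟩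
        have : m ∈ childList (psv A) n j :=
          mem_childList.mpr ⟨hm1, hmn, hmP, by rw [← hmP]; exact hP1 m hm1⟩
        rw [hleaf] at this
        simp at this
      · rintro ⟨-, h3, -⟩
        rw [hbs, hf, show (u ++ u0).length + 3 - 3 = (u ++ u0).length from rfl, hg1] at h3
        simp at h3
    · -- sibling is internal : both sides true
      have hne : (childList (psv A) n j).map (subT (psv A) n) ≠ [] := by
        intro h
        exact hleaf (by simpa using h)
      obtain ⟨B, r, hB⟩ := bptL_last _ hne
      have hbj : bpt (subT (psv A) n j) =
          ((false, j) :: B) ++ [((true : Bool), r), ((true : Bool), j)] := by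
        rw [bpt_subT, hB]
        simp
      obtain ⟨u0, rest, hdecP⟩ : ∃ u0 rest, bpt (subT (psv A) n (psv A i)) =
          u0 ++ ((true : Bool), r) :: ((true : Bool), j) :: ((false : Bool), i) :: rest := by
        refine ⟨((false, psv A i) :: bptL (l1.map (subT (psv A) n))) ++ ((false, j) :: B),
          (bptL ((childList (psv A) n i).map (subT (psv A) n)) ++ [(true, i)]) ++
            (bptL (l2.map (subT (psv A) n)) ++ [(true, psv A i)]), ?_⟩
        rw [bpt_subT, hcs, List.map_append, List.map_cons, List.map_cons, bptL_append,
          bptL_cons, bptL_cons, hbj]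
        conv_lhs => rw [bpt_subT (P := psv A) (n := n) (i := i)]
        simp
      have hdec : bpt (subT (psv A) n 0) = (u ++ u0) ++
          ((true : Bool), r) :: ((true : Bool), j) :: ((false : Bool), i) :: (rest ++ v) := by
        rw [← huv, hdecP]; simp
      obtain ⟨hidx, hg1, hg2⟩ := calc_main hdec hcnt (by simp) (by simp)
      have hf : fpos (minTree A n) i = (u ++ u0).length + 3 := by
        unfold fpos
        rw [hLM, hidx]
      have hbs : bpSeq (minTree A n) = (bpt (subT (psv A) n 0)).map Prod.fst := by
        unfold bpSeq
        rw [hLM]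
      apply iff_of_true
      · refine ⟨h1, h2, hLft, ?_⟩
        rintro ⟨j', hsib', hleaf'⟩
        have hjj : j' = j := by
          by_contra hne'
          rcases Nat.lt_or_ge j' j with hlt | hge
          · exact hsib'.2.2.2.2 j hlt hji hjP
          · exact hadj j' (by omega) hsib'.2.1 hsib'.2.2.2.1
        subst hjj
        obtain ⟨m, hm⟩ := List.exists_mem_of_ne_nil _ hleaf
        have hm' := mem_childList.mp hm
        exact hleaf' ⟨m, hm'.1, hm'.2.1, hm'.2.2.1⟩
      · refine ⟨?_, ?_, ?_⟩
        · rw [hf]; omega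
        · rw [hbs, hf, show (u ++ u0).length + 3 - 3 = (u ++ u0).length from rfl, hg1]
        · rw [hbs, hf, show (u ++ u0).length + 3 - 2 = (u ++ u0).length + 1 from rfl, hg2]
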